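/- Let p ≡ 1 (mod 4) be a prime. Then every column of the Paley ETF Φ_p has unit ℓ₂ norm, and any two distinct columns φ, φ' of Φ_p (including the column indexed by ∞) satisfy |⟨φ, φ'⟩| = 1/√p, where ⟨u, v⟩ = ∑_k u_k·conj(v_k); that is, the columns of Φ_p are equiangular unit vectors. -/

import Mathlib

open scoped Classical
open Finset

noncomputable section

/-- The quadratic character `χ` of `F_p`: `χ 0 = 0`, `χ x = 1` if `x` is a nonzero square,
and `χ x = -1` otherwise. -/
def quadChar (p : ℕ) (x : ZMod p) : ℤ :=
  if x = 0 then 0 else if IsSquare x then 1 else -1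

/-- The canonical additive character `ψ` of `F_p`, `ψ x = exp(2πi·x/p)`. -/
def addChar' (p : ℕ) (x : ZMod p) : ℂ :=
  Complex.exp (2 * Real.pi * Complex.I * (x.val : ℂ) / (p : ℂ))

/-- The set of quadratic residues mod `p` (nonzero squares), as a type. -/
abbrev QRes (p : ℕ) : Type := {b : ZMod p // b ≠ 0 ∧ IsSquare b}

/-- The Paley ETF: rows indexed by `{0} ∪ Q_p` (with `none` the `0`-row),
columns indexed by `F_p ∪ {∞}` (with `none` the `∞`-column). -/
def PaleyETF (p : ℕ) : Matrix (Option (QRes p)) (Option (ZMod p)) ℂ :=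
  fun r c =>
    match r, c with
    | none, none => 1
    | none, some _ => ((1 / Real.sqrt p : ℝ) : ℂ)
    | some _, none => 0
    | some b, some a => ((Real.sqrt (2 / p) : ℝ) : ℂ) * addChar' p (b.1 * a)

/-- `(K, δ)`-restricted isometry property for a complex matrix: for every vector `x`
with at most `K` nonzero entries, `(1-δ)‖x‖² ≤ ‖Φx‖² ≤ (1+δ)‖x‖²`. -/
def HasRIP {M N : Type*} [Fintype M] [Fintype N] (Φ : Matrix M N ℂ) (K δ : ℝ) : Prop :=
  ∀ x : N → ℂ, ((Finset.univ.filter fun n => x n ≠ 0).card : ℝ) ≤ K →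
    (1 - δ) * ∑ n, ‖x n‖ ^ 2 ≤ ∑ m, ‖∑ n, Φ m n * x n‖ ^ 2 ∧
      ∑ m, ‖∑ n, Φ m n * x n‖ ^ 2 ≤ (1 + δ) * ∑ n, ‖x n‖ ^ 2

/-- The Paley graph extractor: `Ext_p(x,y) = 1` if `x = y`, and `(χ(x−y)+1)/2` otherwise
(which is `1` iff `x − y` is a nonzero square, `0` otherwise). -/
def paleyExt (p : ℕ) (x y : ZMod p) : ℕ :=
  if x = y then 1 else if IsSquare (x - y) then 1 else 0

/-- Indicator vector of `U ⊆ F_p` with respect to the column indexing of the Paley ETF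
(entry `0` in the `∞` coordinate). -/
def indic (p : ℕ) (U : Finset (ZMod p)) : Option (ZMod p) → ℂ :=
  fun c => match c with
  | none => 0
  | some a => if a ∈ U then 1 else 0

namespace PaleyAux

variable (p : ℕ) [hp : Fact p.Prime]

def zet : ℂ := Complex.exp (2 * Real.pi * Complex.I / p)

lemma hzet : IsPrimitiveRoot (zet p) p := Complex.isPrimitiveRoot_exp p hp.out.ne_zero

def psi : AddChar (ZMod p) ℂ := AddChar.zmodChar p (hzet p).pow_eq_one

def chi' : MulChar (ZMod p) ℂ :=
  (quadraticChar (ZMod p)).ringHomComp (Int.castRingHom ℂ)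

lemma addChar'_eq (x : ZMod p) : addChar' p x = psi p x := by
  rw [psi, AddChar.zmodChar_apply, zet, ← Complex.exp_nat_mul, addChar']
  congr 1
  ring

lemma abs_psi (x : ZMod p) : ‖psi p x‖ = 1 := by
  rw [← addChar'_eq, addChar']
  have : 2 * Real.pi * Complex.I * (x.val : ℂ) / (p : ℂ)
      = ((2 * Real.pi * x.val / p : ℝ) : ℂ) * Complex.I := by
    push_cast; ring
  rw [this, Complex.norm_exp_ofReal_mul_I]

lemma conj_psi (x : ZMod p) : starRingEnd ℂ (psi p x) = psi p (-x) := by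
  have h1 : psi p x * psi p (-x) = 1 := by
    rw [← AddChar.map_add_eq_mul, add_neg_cancel, AddChar.map_zero_eq_one]
  have h2 : starRingEnd ℂ (psi p x) * psi p x = 1 := by
    rw [mul_comm, Complex.mul_conj, Complex.normSq_eq_norm_sq, abs_psi]
    norm_num
  calc starRingEnd ℂ (psi p x) = starRingEnd ℂ (psi p x) * (psi p x * psi p (-x)) := by
        rw [h1, mul_one]
    _ = psi p (-x) := by rw [← mul_assoc, h2, one_mul]

lemma psi_ne_zero' : psi p ≠ 0 := by
  rw [AddChar.ne_zero_iff]
  refine ⟨1, ?_⟩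
  haveI : Fact (1 < p) := ⟨hp.out.one_lt⟩
  rw [psi, AddChar.zmodChar_apply, ZMod.val_one, pow_one]
  exact (hzet p).ne_one hp.out.one_lt

lemma psi_prim : (psi p).IsPrimitive :=
  AddChar.zmodChar_primitive_of_primitive_root p (hzet p)

lemma sum_psi_mul {d : ZMod p} (hd : d ≠ 0) : ∑ x : ZMod p, psi p (x * d) = 0 := by
  have hb := (Equiv.mulRight₀ d hd).bijective
  have h2 := Fintype.sum_bijective _ hb (fun x => psi p (x * d)) (fun y => psi p y)
    (fun x => rfl)
  rw [h2]
  exact AddChar.sum_eq_zero_iff_ne_zero.mpr (psi_ne_zero' p)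

lemma chi'_sq {d : ZMod p} (hd : d ≠ 0) : chi' p d * chi' p d = 1 := by
  have h := quadraticChar_sq_one hd
  simp only [chi', MulChar.ringHomComp_apply, eq_intCast, ← sq]
  exact_mod_cast h

lemma abs_chi' {d : ZMod p} (hd : d ≠ 0) : ‖chi' p d‖ = 1 := by
  rcases quadraticChar_dichotomy hd with h | h <;>
    simp [chi', MulChar.ringHomComp_apply, h]

lemma sum_chi_psi {d : ZMod p} (hd : d ≠ 0) :
    ∑ x : ZMod p, chi' p x * psi p (x * d) = chi' p d * gaussSum (chi' p) (psi p) := by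
  have key := gaussSum_mulShift (chi' p) (psi p) (Units.mk0 d hd)
  have h1 : gaussSum (chi' p) ((psi p).mulShift (Units.mk0 d hd))
      = ∑ x : ZMod p, chi' p x * psi p (x * d) := by
    simp only [gaussSum, AddChar.mulShift_apply, Units.val_mk0, mul_comm d]
  rw [h1] at key
  simp only [Units.val_mk0] at key
  rw [← key, ← mul_assoc, chi'_sq p hd, one_mul]

lemma master (d : ZMod p) :
    (1 : ℂ) + 2 * ∑ b : QRes p, psi p (b.1 * d)
      = ∑ x : ZMod p, (1 + chi' p x) * psi p (x * d) := by
  rw [← Finset.sum_filter_add_sum_filter_not Finset.univ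
    (fun x : ZMod p => x ≠ 0 ∧ IsSquare x) (fun x => (1 + chi' p x) * psi p (x * d))]
  have hA : ∑ x ∈ Finset.univ.filter (fun x : ZMod p => x ≠ 0 ∧ IsSquare x),
      (1 + chi' p x) * psi p (x * d) = 2 * ∑ b : QRes p, psi p (b.1 * d) := by
    have step1 : ∑ x ∈ Finset.univ.filter (fun x : ZMod p => x ≠ 0 ∧ IsSquare x),
        (1 + chi' p x) * psi p (x * d)
        = ∑ x ∈ Finset.univ.filter (fun x : ZMod p => x ≠ 0 ∧ IsSquare x),
          2 * psi p (x * d) := by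
      refine Finset.sum_congr rfl fun x hx => ?_
      rw [Finset.mem_filter] at hx
      have h1 : quadraticChar (ZMod p) x = 1 :=
        (quadraticChar_one_iff_isSquare hx.2.1).mpr hx.2.2
      rw [chi', MulChar.ringHomComp_apply, h1]
      norm_num
    rw [step1, Finset.sum_subtype (p := fun b : ZMod p => b ≠ 0 ∧ IsSquare b) _
      (by intro x; simp) (fun b => 2 * psi p (b * d)), ← Finset.mul_sum]
  have hB : ∑ x ∈ Finset.univ.filter (fun x : ZMod p => ¬(x ≠ 0 ∧ IsSquare x)),
      (1 + chi' p x) * psi p (x * d) = 1 := by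
    refine Finset.sum_eq_single_of_mem 0 (by simp) ?_ |>.trans ?_
    · intro x hx hx0
      rw [Finset.mem_filter] at hx
      have hns : ¬IsSquare x := fun hs => hx.2 ⟨hx0, hs⟩
      have h1 : quadraticChar (ZMod p) x = -1 :=
        quadraticChar_neg_one_iff_not_isSquare.mpr hns
      rw [chi', MulChar.ringHomComp_apply, h1]
      norm_num
    · rw [chi', MulChar.ringHomComp_apply, quadraticChar_zero, zero_mul,
        AddChar.map_zero_eq_one]
      norm_num
  rw [hA, hB]
  ring

lemma ringChar_ne_two (hp4 : p % 4 = 1) : ringChar (ZMod p) ≠ 2 := by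
  rw [ZMod.ringChar_zmod_n]; omega

lemma chi'_ne_one (hp4 : p % 4 = 1) : chi' p ≠ 1 :=
  (MulChar.ringHomComp_ne_one_iff (RingHom.injective_int _)).mpr
    (quadraticChar_ne_one (ringChar_ne_two p hp4))

lemma chi'_neg_one (hp4 : p % 4 = 1) : chi' p (-1) = 1 := by
  haveI : Fact (1 < p) := ⟨hp.out.one_lt⟩
  have hne : (-1 : ZMod p) ≠ 0 := by simp [neg_eq_zero]
  have hs : IsSquare (-1 : ZMod p) := by
    rw [ZMod.exists_sq_eq_neg_one_iff]; omega
  have h1 : quadraticChar (ZMod p) (-1) = 1 :=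
    (quadraticChar_one_iff_isSquare hne).mpr hs
  simp [chi', MulChar.ringHomComp_apply, h1]

lemma sum_chi' (hp4 : p % 4 = 1) : ∑ x : ZMod p, chi' p x = 0 := by
  have h := quadraticChar_sum_zero (ringChar_ne_two p hp4)
  rw [show (0:ℂ) = ((0:ℤ):ℂ) by norm_num, ← h, Int.cast_sum]
  simp [chi', MulChar.ringHomComp_apply]

lemma gauss_sq (hp4 : p % 4 = 1) : gaussSum (chi' p) (psi p) ^ 2 = p := by
  have := gaussSum_sq (chi'_ne_one p hp4)
    ((quadraticChar_isQuadratic (ZMod p)).comp _) (psi_prim p)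
  rw [this, chi'_neg_one p hp4, one_mul, ZMod.card]

lemma abs_gauss (hp4 : p % 4 = 1) :
    ‖gaussSum (chi' p) (psi p)‖ = Real.sqrt p := by
  have h2 : ‖gaussSum (chi' p) (psi p)‖ ^ 2 = p := by
    rw [← norm_pow, gauss_sq p hp4, Complex.norm_natCast]
  rw [← Real.sqrt_sq (norm_nonneg _), h2]

lemma card_q (hp4 : p % 4 = 1) : 1 + 2 * (Fintype.card (QRes p)) = p := by
  have h := master p 0
  simp only [mul_zero, AddChar.map_zero_eq_one, mul_one] at h
  rw [Finset.sum_const, Finset.card_univ, nsmul_eq_mul, mul_one] at h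
  rw [Finset.sum_add_distrib, Finset.sum_const, Finset.card_univ, nsmul_eq_mul,
    mul_one, ZMod.card, sum_chi' p hp4, add_zero] at h
  have h2 : ((1 + 2 * Fintype.card (QRes p) : ℕ) : ℂ) = ((p : ℕ) : ℂ) := by
    push_cast
    linear_combination h
  exact_mod_cast h2

lemma sum2S {d : ZMod p} (hd : d ≠ 0) :
    2 * ∑ b : QRes p, psi p (b.1 * d)
      = chi' p d * gaussSum (chi' p) (psi p) - 1 := by
  have h := master p d
  have hsplit : ∑ x : ZMod p, (1 + chi' p x) * psi p (x * d)
      = ∑ x : ZMod p, psi p (x * d) + ∑ x : ZMod p, chi' p x * psi p (x * d) := by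
    rw [← Finset.sum_add_distrib]
    exact Finset.sum_congr rfl fun x _ => by ring
  rw [hsplit, sum_psi_mul p hd, sum_chi_psi p hd, zero_add] at h
  linear_combination h

end PaleyAux

open PaleyAux in
theorem paley_equiangular (p : ℕ) [Fact p.Prime] (hp4 : p % 4 = 1) :
    (∀ c : Option (ZMod p), ∑ r : Option (QRes p), ‖PaleyETF p r c‖ ^ 2 = 1) ∧
      (∀ c c' : Option (ZMod p), c ≠ c' →
        ‖(∑ r : Option (QRes p),
            PaleyETF p r c * starRingEnd ℂ (PaleyETF p r c'))‖ = 1 / Real.sqrt p) := by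
  have hp' : p.Prime := Fact.out
  have hppos : (0:ℝ) < p := by exact_mod_cast hp'.pos
  have hpne : (p:ℝ) ≠ 0 := ne_of_gt hppos
  have hpc : (p:ℂ) ≠ 0 := Nat.cast_ne_zero.mpr hp'.ne_zero
  have hsqpos : 0 < Real.sqrt p := Real.sqrt_pos.mpr hppos
  have hsq : Real.sqrt p ≠ 0 := ne_of_gt hsqpos
  have hsum_option : ∀ (f : Option (QRes p) → ℂ),
      ∑ r : Option (QRes p), f r = f none + ∑ b : QRes p, f (some b) := by
    intro f
    rw [show (Finset.univ : Finset (Option (QRes p))) = Finset.insertNone Finset.univ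
      from univ_option _, Finset.sum_insertNone]
  have hsum_optionR : ∀ (f : Option (QRes p) → ℝ),
      ∑ r : Option (QRes p), f r = f none + ∑ b : QRes p, f (some b) := by
    intro f
    rw [show (Finset.univ : Finset (Option (QRes p))) = Finset.insertNone Finset.univ
      from univ_option _, Finset.sum_insertNone]
  have hNr : (p:ℝ) = 1 + 2 * (Fintype.card (QRes p) : ℝ) := by
    exact_mod_cast (card_q p hp4).symm
  constructor
  · intro c
    rw [hsum_optionR]
    cases c with
    | none =>
      simp [PaleyETF]
    | some a =>
      have hterm : ∀ b : QRes p, ‖PaleyETF p (some b) (some a)‖ ^ 2 = 2 / p := by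
        intro b
        show ‖((Real.sqrt (2/p) : ℝ) : ℂ) * addChar' p (b.1 * a)‖ ^ 2 = 2 / p
        rw [norm_mul, Complex.norm_real, addChar'_eq, abs_psi,
          mul_one, Real.norm_eq_abs, abs_of_nonneg (Real.sqrt_nonneg _),
          Real.sq_sqrt (by positivity)]
      have hnone : ‖PaleyETF p none (some a)‖ ^ 2 = 1 / p := by
        show ‖((1 / Real.sqrt p : ℝ) : ℂ)‖ ^ 2 = 1 / p
        rw [Complex.norm_real, Real.norm_eq_abs, abs_of_nonneg (by positivity),
          div_pow, one_pow, Real.sq_sqrt hppos.le]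
      rw [hnone, Finset.sum_congr rfl (fun b _ => hterm b), Finset.sum_const,
        Finset.card_univ, nsmul_eq_mul]
      field_simp
      linarith
  · intro c c' hne
    cases c with
    | none =>
      cases c' with
      | none => exact absurd rfl hne
      | some a =>
        rw [hsum_option]
        have h1 : PaleyETF p none none * starRingEnd ℂ (PaleyETF p none (some a))
            = ((1 / Real.sqrt p : ℝ) : ℂ) := by
          show (1 : ℂ) * starRingEnd ℂ ((((1 / Real.sqrt p : ℝ)) : ℂ)) = _
          rw [one_mul, Complex.conj_ofReal]
        have h2 : ∀ b : QRes p, PaleyETF p (some b) none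
            * starRingEnd ℂ (PaleyETF p (some b) (some a)) = 0 := by
          intro b
          show (0 : ℂ) * _ = 0
          rw [zero_mul]
        rw [h1, Finset.sum_congr rfl (fun b _ => h2 b), Finset.sum_const, smul_zero,
          add_zero, Complex.norm_real, Real.norm_eq_abs, abs_of_nonneg (by positivity)]
    | some a =>
      cases c' with
      | none =>
        rw [hsum_option]
        have h1 : PaleyETF p none (some a) * starRingEnd ℂ (PaleyETF p none none)
            = ((1 / Real.sqrt p : ℝ) : ℂ) := by
          show ((((1 / Real.sqrt p : ℝ)) : ℂ)) * starRingEnd ℂ (1 : ℂ) = _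
          rw [map_one, mul_one]
        have h2 : ∀ b : QRes p, PaleyETF p (some b) (some a)
            * starRingEnd ℂ (PaleyETF p (some b) none) = 0 := by
          intro b
          show _ * starRingEnd ℂ (0 : ℂ) = 0
          rw [map_zero, mul_zero]
        rw [h1, Finset.sum_congr rfl (fun b _ => h2 b), Finset.sum_const, smul_zero,
          add_zero, Complex.norm_real, Real.norm_eq_abs, abs_of_nonneg (by positivity)]
      | some a' =>
        have ha : a ≠ a' := by simpa using hne
        set d : ZMod p := a - a' with hd_def
        have hd : d ≠ 0 := sub_ne_zero.mpr ha
        rw [hsum_option]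
        have h1 : PaleyETF p none (some a) * starRingEnd ℂ (PaleyETF p none (some a'))
            = ((1 / p : ℝ) : ℂ) := by
          show ((((1 / Real.sqrt p : ℝ)) : ℂ)) * starRingEnd ℂ ((((1 / Real.sqrt p : ℝ)) : ℂ)) = _
          rw [Complex.conj_ofReal, ← Complex.ofReal_mul]
          congr 1
          rw [div_mul_div_comm, one_mul, Real.mul_self_sqrt hppos.le]
        have h2 : ∀ b : QRes p, PaleyETF p (some b) (some a)
            * starRingEnd ℂ (PaleyETF p (some b) (some a'))
            = ((2 / p : ℝ) : ℂ) * psi p (b.1 * d) := by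
          intro b
          show ((Real.sqrt (2/p) : ℝ) : ℂ) * addChar' p (b.1 * a)
            * starRingEnd ℂ (((Real.sqrt (2/p) : ℝ) : ℂ) * addChar' p (b.1 * a')) = _
          rw [map_mul, Complex.conj_ofReal, addChar'_eq, addChar'_eq, conj_psi]
          have hmul : psi p (b.1 * a) * psi p (-(b.1 * a')) = psi p (b.1 * d) := by
            rw [← AddChar.map_add_eq_mul]
            congr 1
            rw [hd_def]
            ring
          calc ((Real.sqrt (2/p) : ℝ) : ℂ) * psi p (b.1 * a)
              * (((Real.sqrt (2/p) : ℝ) : ℂ) * psi p (-(b.1 * a')))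
              = (((Real.sqrt (2/p) : ℝ) : ℂ) * ((Real.sqrt (2/p) : ℝ) : ℂ))
                * (psi p (b.1 * a) * psi p (-(b.1 * a'))) := by ring
            _ = ((2 / p : ℝ) : ℂ) * psi p (b.1 * d) := by
                rw [hmul, ← Complex.ofReal_mul, Real.mul_self_sqrt (by positivity)]
        have h2S := sum2S p hd
        have key : ((1 / p : ℝ) : ℂ) + ∑ b : QRes p, ((2 / p : ℝ) : ℂ) * psi p (b.1 * d)
            = (p : ℂ)⁻¹ * (chi' p d * gaussSum (chi' p) (psi p)) := by
          rw [← Finset.mul_sum]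
          push_cast
          field_simp
          linear_combination h2S
        rw [h1, Finset.sum_congr rfl (fun b _ => h2 b), key, norm_mul, norm_mul,
          norm_inv, Complex.norm_natCast, abs_chi' p hd, one_mul, abs_gauss p hp4]
        rw [eq_div_iff hsq, mul_assoc, Real.mul_self_sqrt hppos.le,
          inv_mul_cancel₀ hpne]
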